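/- If c ∈ ℝ satisfies Σ_{i ∈ S} a_i·c^i ≠ 0, then for every formal power series η ∈ ℝ[[t]] with order(η) > p, the power series Σ_{i=0}^d c_i·(c·t^p + η)^i has t-adic order equal to b_0. -/

import Mathlib

open PowerSeries

lemma aux_le_order_C_mul_X_pow (b : ℝ) (m : ℕ) :
    (m : ℕ∞) ≤ (PowerSeries.C b * PowerSeries.X ^ m).order := by
  calc (m : ℕ∞) = 0 + m := by simp
  _ ≤ (PowerSeries.C b).order + ((PowerSeries.X : PowerSeries ℝ) ^ m).order := by
      rw [order_X_pow]; exact add_le_add_left (zero_le (α := ℕ∞)) _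
  _ ≤ _ := le_order_mul _ _

lemma aux_pow_structure (a : ℝ) (p : ℕ) (η : PowerSeries ℝ) (hη : (p : ℕ∞) < η.order) (i : ℕ) :
    ∃ r : PowerSeries ℝ,
      (PowerSeries.C a * PowerSeries.X ^ p + η) ^ i
        = PowerSeries.C (a ^ i) * PowerSeries.X ^ (i * p) + r
      ∧ ((i * p : ℕ) : ℕ∞) < r.order := by
  induction i with
  | zero => exact ⟨0, by simp, by simp⟩
  | succ i ih =>
    obtain ⟨r, hr, hro⟩ := ih
    refine ⟨PowerSeries.C a * PowerSeries.X ^ p * r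
        + η * (PowerSeries.C (a ^ i) * PowerSeries.X ^ (i * p) + r), ?_, ?_⟩
    · rw [pow_succ', hr]
      have h1 : PowerSeries.C (a ^ (i + 1)) = PowerSeries.C a * PowerSeries.C (a ^ i) := by
        rw [← map_mul, ← pow_succ']
      have h2 : (PowerSeries.X : PowerSeries ℝ) ^ ((i + 1) * p)
          = PowerSeries.X ^ p * PowerSeries.X ^ (i * p) := by
        rw [← pow_add, add_mul, one_mul, add_comm]
      rw [h1, h2]; ring
    · have hkey : (((i + 1) * p : ℕ) : ℕ∞) = (p : ℕ∞) + ((i * p : ℕ) : ℕ∞) := by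
        push_cast; ring
      refine lt_of_lt_of_le ?_ (min_order_le_order_add _ _)
      rw [lt_min_iff]
      constructor
      · calc (((i + 1) * p : ℕ) : ℕ∞) < (p : ℕ∞) + r.order := by
              rw [hkey]
              exact WithTop.add_lt_add_left (ENat.coe_ne_top p) hro
        _ ≤ (PowerSeries.C a * PowerSeries.X ^ p).order + r.order :=
              add_le_add_left (aux_le_order_C_mul_X_pow a p) _
        _ ≤ _ := le_order_mul _ _
      · calc (((i + 1) * p : ℕ) : ℕ∞) < η.order + ((i * p : ℕ) : ℕ∞) := by
              rw [hkey]
              exact WithTop.add_lt_add_right (ENat.coe_ne_top _) hη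
        _ ≤ η.order + (PowerSeries.C (a ^ i) * PowerSeries.X ^ (i * p) + r).order := by
              refine add_le_add_right (le_trans ?_ (min_order_le_order_add _ _)) _
              exact le_min (aux_le_order_C_mul_X_pow _ _) hro.le
        _ ≤ _ := le_order_mul _ _

/-- Lemma 2.2(i), 'in particular' part: if `c` is not a root of the polynomial associated
to the highest Newton edge, then the order of `Σ cᵢ·(c·t^p + η)^i` equals `order c₀`. -/
theorem order_preserved_nonroot_perturbation
    (d : ℕ) (c : Fin (d + 1) → PowerSeries ℝ) (hc : ∃ i, c i ≠ 0)
    (p : ℕ) (hp : 0 < p)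
    (hb0 : (c 0).order ≠ ⊤)
    (hmin : ∀ i : Fin (d + 1), (c 0).order ≤ ((i : ℕ) * p : ℕ∞) + (c i).order)
    (a : ℝ)
    (ha : (∑ i ∈ Finset.univ.filter
        (fun i : Fin (d + 1) => ((i : ℕ) * p : ℕ∞) + (c i).order = (c 0).order),
        (PowerSeries.coeff ((c i).order.toNat) (c i)) * a ^ (i : ℕ)) ≠ 0) :
    ∀ η : PowerSeries ℝ, (p : ℕ∞) < η.order →
      (∑ i : Fin (d + 1),
        c i * (PowerSeries.C a * PowerSeries.X ^ p + η) ^ (i : ℕ)).order =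
        (c 0).order := by
  intro η hη
  set g : PowerSeries ℝ := PowerSeries.C a * PowerSeries.X ^ p + η with hg
  set b0 : ℕ := (c 0).order.toNat with hb0def
  have hord0 : (c 0).order = (b0 : ℕ∞) := (ENat.coe_toNat hb0).symm
  -- order of g^i is at least i*p
  have hpow : ∀ i : ℕ, ((i * p : ℕ) : ℕ∞) ≤ (g ^ i).order := by
    intro i
    obtain ⟨r, hr, hro⟩ := aux_pow_structure a p η hη i
    rw [hr]
    exact le_trans (le_min (aux_le_order_C_mul_X_pow _ _) hro.le) (min_order_le_order_add _ _)
  have hmin' : ∀ i : Fin (d + 1), (b0 : ℕ∞) ≤ (((i : ℕ) * p : ℕ) : ℕ∞) + (c i).order := by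
    intro i
    rw [Nat.cast_mul, ← hord0]
    exact hmin i
  -- coefficient of F at b0, termwise
  have hcoeff : ∀ i : Fin (d + 1), PowerSeries.coeff b0 (c i * g ^ (i : ℕ)) =
      if ((i : ℕ) * p : ℕ∞) + (c i).order = (c 0).order then
        (PowerSeries.coeff ((c i).order.toNat) (c i)) * a ^ (i : ℕ) else 0 := by
    intro i
    obtain ⟨r, hr, hro⟩ := aux_pow_structure a p η hη (i : ℕ)
    rw [hr, mul_add, map_add]
    have h2 : PowerSeries.coeff b0 (c i * r) = 0 := by
      by_cases hci : c i = 0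
      · simp [hci]
      · apply coeff_of_lt_order
        have hcif : (c i).order ≠ ⊤ := by simpa [order_eq_top] using hci
        calc (b0 : ℕ∞) ≤ (((i : ℕ) * p : ℕ) : ℕ∞) + (c i).order := hmin' i
        _ = (c i).order + (((i : ℕ) * p : ℕ) : ℕ∞) := add_comm _ _
        _ < (c i).order + r.order := WithTop.add_lt_add_left hcif hro
        _ ≤ (c i * r).order := le_order_mul _ _
    rw [h2, add_zero]
    have hre : c i * (PowerSeries.C (a ^ (i : ℕ)) * PowerSeries.X ^ ((i : ℕ) * p))
        = (PowerSeries.C (a ^ (i : ℕ)) * c i) * PowerSeries.X ^ ((i : ℕ) * p) := by ring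
    rw [hre, PowerSeries.coeff_mul_X_pow', PowerSeries.coeff_C_mul]
    by_cases hiS : ((i : ℕ) * p : ℕ∞) + (c i).order = (c 0).order
    · rw [if_pos hiS]
      have hiS' : (((i : ℕ) * p : ℕ) : ℕ∞) + (c i).order = (b0 : ℕ∞) := by
        rw [Nat.cast_mul, ← hord0]; exact hiS
      have hcif : (c i).order ≠ ⊤ := by
        intro h; rw [h] at hiS'; simp at hiS'
      set bi := (c i).order.toNat with hbidef
      have hbi : (c i).order = (bi : ℕ∞) := (ENat.coe_toNat hcif).symm
      rw [hbi] at hiS'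
      have hnat : (i : ℕ) * p + bi = b0 := by exact_mod_cast hiS'
      have hle : (i : ℕ) * p ≤ b0 := le_of_add_le_left hnat.le
      rw [if_pos hle]
      have h3 : b0 - (i : ℕ) * p = bi := by omega
      rw [h3, mul_comm]
    · rw [if_neg hiS]
      by_cases hm : (i : ℕ) * p ≤ b0
      · rw [if_pos hm]
        have hlt : ((b0 - (i : ℕ) * p : ℕ) : ℕ∞) < (c i).order := by
          have h1 : (b0 : ℕ∞) < (((i : ℕ) * p : ℕ) : ℕ∞) + (c i).order := by
            refine (hmin' i).lt_of_ne ?_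
            intro h
            apply hiS
            rw [hord0, h, Nat.cast_mul]
          have hb0eq : (b0 : ℕ∞) = (((i : ℕ) * p : ℕ) : ℕ∞) + ((b0 - (i : ℕ) * p : ℕ) : ℕ∞) := by
            rw [← Nat.cast_add]; congr 1; omega
          rw [hb0eq] at h1
          exact (WithTop.add_lt_add_iff_left (ENat.coe_ne_top _)).mp h1
        rw [coeff_of_lt_order _ hlt, mul_zero]
      · rw [if_neg hm]
  -- coefficient of F at b0 is the hypothesis sum
  have hFcoeff : PowerSeries.coeff b0 (∑ i : Fin (d + 1), c i * g ^ (i : ℕ)) =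
      ∑ i ∈ Finset.univ.filter
        (fun i : Fin (d + 1) => ((i : ℕ) * p : ℕ∞) + (c i).order = (c 0).order),
        (PowerSeries.coeff ((c i).order.toNat) (c i)) * a ^ (i : ℕ) := by
    rw [map_sum]
    rw [Finset.sum_filter]
    exact Finset.sum_congr rfl fun i _ => hcoeff i
  rw [hord0, order_eq_nat]
  constructor
  · rw [hFcoeff]; exact ha
  · intro k hk
    rw [map_sum]
    refine Finset.sum_eq_zero fun i _ => ?_
    apply coeff_of_lt_order
    calc (k : ℕ∞) < (b0 : ℕ∞) := by exact_mod_cast hk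
    _ ≤ (((i : ℕ) * p : ℕ) : ℕ∞) + (c i).order := hmin' i
    _ ≤ (g ^ (i : ℕ)).order + (c i).order := add_le_add_left (hpow _) _
    _ = (c i).order + (g ^ (i : ℕ)).order := add_comm _ _
    _ ≤ (c i * g ^ (i : ℕ)).order := le_order_mul _ _
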